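/- arXiv:math/0601190 — 6 statements merged into one kernel-verified Lean document; each statement's English description precedes it below -/
import Mathlib

section
/- Under the additional completeness hypotheses on the discrete system, the orthogonal family F_n := Σ_{k=0}^∞ u_k · R k n · p_k has dense linear span in L²(μ); that is, the system (F_n) is complete in L²(μ). (Completeness part of Theorem A.) -/
open MeasureTheory ENNReal

local notation "⟪" x ", " y "⟫" => @inner ℂ _ _ x y

private lemma memℓp_of_hasSum_mul_conj {z : ℕ → ℂ} {t : ℂ}
    (h : HasSum (fun k => z k * (starRingEnd ℂ) (z k)) t) :
    Memℓp z 2 := by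
  apply memℓp_gen
  have h2 : ∀ k, z k * (starRingEnd ℂ) (z k) = ((‖z k‖ ^ (2:ℝ≥0∞).toReal : ℝ) : ℂ) := by
    intro k
    rw [Complex.mul_conj]
    norm_num [Complex.normSq_eq_norm_sq, Real.rpow_natCast]
  rw [funext h2] at h
  have := h.summable
  rwa [Complex.summable_ofReal] at this

/-- **Completeness part of Theorem A** (Ismail).
Under the dual orthogonality, the orthogonality relation
`Σ_j ρ_j ⬝ R n j ⬝ conj (R m j) = δ_{nm}`, and completeness of the rows
`(R n ·)` in the weighted sequence space `ℓ²(ρ)` (expressed via the triviality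
of the orthogonal complement), the family `F_n = Σ_k u_k ⬝ R k n ⬝ p_k` has
dense linear span in `L²(μ)`. -/
theorem fourier_type_system_complete
    {m : MeasurableSpace ℝ} (μ : Measure ℝ)
    [TopologicalSpace.SeparableSpace (Lp ℂ 2 μ)]
    (p : ℕ → Lp ℂ 2 μ)
    (hp_orth : Orthonormal ℂ p)
    (hp_complete : (Submodule.span ℂ (Set.range p)).topologicalClosure = ⊤)
    (hp_real : ∀ k, ∀ᵐ x ∂μ, ((p k : ℝ →ₘ[μ] ℂ) x).im = 0)
    (u : ℕ → ℂ) (hu : ∀ k, ‖u k‖ = 1)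
    (x : ℕ → ℝ) (hx : Function.Injective x)
    (ρ : ℕ → ℝ) (hρ : ∀ n, 0 < ρ n)
    (R : ℕ → ℕ → ℂ)
    (hdual : ∀ n m', HasSum (fun k => R k n * (starRingEnd ℂ) (R k m'))
      (if n = m' then 1 / (ρ n : ℂ) else 0))
    (horth : ∀ n m', HasSum (fun j => (ρ j : ℂ) * R n j * (starRingEnd ℂ) (R m' j))
      (if n = m' then 1 else 0))
    (hRcomplete : ∀ g : ℕ → ℂ, Summable (fun j => ρ j * ‖g j‖ ^ 2) →
      (∀ n, HasSum (fun j => (ρ j : ℂ) * R n j * (starRingEnd ℂ) (g j)) 0) → g = 0) :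
    ∃ F : ℕ → Lp ℂ 2 μ,
      (∀ n, HasSum (fun k => (u k * R k n) • p k) (F n)) ∧
      (Submodule.span ℂ (Set.range F)).topologicalClosure = ⊤ := by
  classical
  have hu' : ∀ k, u k * (starRingEnd ℂ) (u k) = 1 := by
    intro k
    rw [Complex.mul_conj]
    norm_cast
    rw [Complex.normSq_eq_norm_sq, hu k, one_pow]
  have hu'' : ∀ k, (starRingEnd ℂ) (u k) * u k = 1 := by
    intro k; rw [mul_comm]; exact hu' k
  set s : ℕ → ℂ := fun n => ((Real.sqrt (ρ n) : ℝ) : ℂ) with hs_def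
  have hs : ∀ n, s n * s n = (ρ n : ℂ) := by
    intro n
    rw [hs_def]
    rw [show (fun n => ((Real.sqrt (ρ n) : ℝ) : ℂ)) n = ((Real.sqrt (ρ n) : ℝ) : ℂ) from rfl,
      ← Complex.ofReal_mul, Real.mul_self_sqrt (hρ n).le]
  have hs_conj : ∀ n, (starRingEnd ℂ) (s n) = s n := fun n => Complex.conj_ofReal _
  -- Hilbert basis
  let b : HilbertBasis ℕ ℂ (Lp ℂ 2 μ) := HilbertBasis.mk hp_orth (le_of_eq hp_complete.symm)
  have hb : ⇑b = p := HilbertBasis.coe_mk _ _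
  -- the columns, as elements of ℓ²
  have hvmem : ∀ n, Memℓp (fun k => u k * R k n) 2 := by
    intro n
    have he : (fun k => (u k * R k n) * (starRingEnd ℂ) (u k * R k n))
        = fun k => R k n * (starRingEnd ℂ) (R k n) := by
      funext k
      rw [map_mul]
      linear_combination (R k n * (starRingEnd ℂ) (R k n)) * (hu' k)
    exact memℓp_of_hasSum_mul_conj (he ▸ hdual n n)
  -- the rows, as elements of ℓ²
  have hrmem : ∀ k, Memℓp (fun n => s n * (u k * R k n)) 2 := by
    intro k
    have he : (fun j => (s j * (u k * R k j)) * (starRingEnd ℂ) (s j * (u k * R k j)))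
        = fun j => (ρ j : ℂ) * R k j * (starRingEnd ℂ) (R k j) := by
      funext j
      rw [map_mul, map_mul, hs_conj]
      have h1 := hs j
      have h2 := hu' k
      linear_combination (u k * R k j * (starRingEnd ℂ) (u k) * (starRingEnd ℂ) (R k j)) * h1
        + ((ρ j : ℂ) * R k j * (starRingEnd ℂ) (R k j)) * h2
    exact memℓp_of_hasSum_mul_conj (he ▸ horth k k)
  set v : ℕ → lp (fun _ : ℕ => ℂ) 2 := fun n => ⟨fun k => u k * R k n, hvmem n⟩ with hv_def
  set r : ℕ → lp (fun _ : ℕ => ℂ) 2 := fun k => ⟨fun n => s n * (u k * R k n), hrmem k⟩ with hr_def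
  refine ⟨fun n => b.repr.symm (v n), ?_, ?_⟩
  · intro n
    have h := b.hasSum_repr_symm (v n)
    have he : (fun k => (v n k) • b k) = fun k => (u k * R k n) • p k :=
      funext fun k => congrArg (fun z => (u k * R k n) • z) (congrFun hb k)
    exact he ▸ h
  · -- completeness
    rw [Submodule.topologicalClosure_eq_top_iff, Submodule.eq_bot_iff]
    intro f hf
    rw [Submodule.mem_orthogonal] at hf
    have hFo : ∀ n, ⟪b.repr.symm (v n), f⟫ = 0 := fun n =>
      hf _ (Submodule.subset_span ⟨n, rfl⟩)
    have hc : ∀ n, HasSum (fun k => (starRingEnd ℂ) (u k * R k n) * (b.repr f k)) 0 := by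
      intro n
      have h1 := lp.hasSum_inner (𝕜 := ℂ) (v n) (b.repr f)
      have h2 : ⟪v n, b.repr f⟫ = (0:ℂ) := by
        have h3 := b.repr.inner_map_map (b.repr.symm (v n)) f
        rw [LinearIsometryEquiv.apply_symm_apply] at h3
        rw [h3, hFo n]
      rw [h2] at h1
      simp only [RCLike.inner_apply'] at h1
      exact h1
    -- orthonormality of rows
    have hron : Orthonormal ℂ r := by
      rw [orthonormal_iff_ite]
      intro k k'
      have h1 := lp.hasSum_inner (𝕜 := ℂ) (r k) (r k')
      have h2 := (horth k' k).mul_left ((starRingEnd ℂ) (u k) * u k')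
      have he : (fun j => ((starRingEnd ℂ) (u k) * u k')
            * ((ρ j : ℂ) * R k' j * (starRingEnd ℂ) (R k j)))
          = fun j => ⟪r k j, r k' j⟫ := by
        funext j
        rw [RCLike.inner_apply']
        rw [show r k j = s j * (u k * R k j) from rfl, show r k' j = s j * (u k' * R k' j) from rfl]
        rw [map_mul, map_mul, hs_conj]
        linear_combination (-((starRingEnd ℂ) (u k) * u k' * R k' j * (starRingEnd ℂ) (R k j))) * (hs j)
      rw [he] at h2
      have h4 := h1.unique h2
      rw [h4]
      by_cases hkk : k = k'
      · subst hkk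
        simp [hu'' k]
      · rw [if_neg (fun h => hkk h.symm), if_neg hkk, mul_zero]
    -- the conjugate coefficient sequence
    set c : lp (fun _ : ℕ => ℂ) 2 := b.repr f with hc_def
    set d : lp (fun _ : ℕ => ℂ) 2 := star c with hd_def
    have hd : ∀ k, d k = (starRingEnd ℂ) (c k) := fun k => by
      rw [hd_def, lp.star_apply]; rfl
    set T := hron.orthogonalFamily.linearIsometry with hT_def
    have hTd := hron.orthogonalFamily.hasSum_linearIsometry d
    have hcoord : ∀ n, T d n = 0 := by
      intro n
      have h6 := hTd.mapL (innerSL ℂ (lp.single 2 n (1:ℂ)))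
      simp only [innerSL_apply_apply, LinearIsometry.toSpanSingleton_apply, inner_smul_right,
        lp.inner_single_left, RCLike.inner_apply', map_one, one_mul] at h6
      -- h6 : HasSum (fun k => d k * (r k n)) (T d n)
      have h7 := ((hc n).star).mul_left (s n)
      have he2 : (fun k => s n * (star ((starRingEnd ℂ) (u k * R k n) * (c k))))
          = fun k => d k * r k n := by
        funext k
        rw [hd k, show r k n = s n * (u k * R k n) from rfl]
        simp only [star_mul', RCLike.star_def, Complex.conj_conj]
        ring
      rw [star_zero, mul_zero] at h7
      rw [he2] at h7
      exact (h6.unique h7).symm ▸ (h6.unique h7)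
    have hTd0 : T d = 0 := by
      apply lp.ext
      funext n
      rw [hcoord n]
      simp
    have hd0 : d = 0 := T.injective (by simpa using hTd0)
    have hc0 : c = 0 := by
      rw [hd_def] at hd0
      exact star_eq_zero.mp hd0
    exact (LinearIsometryEquiv.map_eq_zero_iff b.repr).mp hc0
end

section
/- For every t ∈ ℝ the series K(·,t) := Σ_{k=0}^∞ u_k · (𝒥 k t) · p_k converges in L²(μ), and for every n one has K(·, x_n) = λ_n · F_n in L²(μ), where F_n := Σ_{k=0}^∞ u_k · R k n · p_k. (Theorem 1: existence of a kernel interpolating the orthogonal system at the nodes.) -/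
open MeasureTheory

lemma summable_smul_orthonormal {E : Type*} [NormedAddCommGroup E]
    [InnerProductSpace ℂ E] [CompleteSpace E] {p : ℕ → E}
    (hp : Orthonormal ℂ p) (c : ℕ → ℂ) (hc : Summable fun k => ‖c k‖ ^ 2) :
    Summable fun k => c k • p k := by
  have := (hp.orthogonalFamily.summable_iff_norm_sq_summable c).mpr hc
  simpa [LinearIsometry.toSpanSingleton_apply] using this

/-- **Theorem 1** of the paper: given functions `𝒥 k` which are square-summable in `k`
for every real `t` and interpolate the discrete orthonormal system `R` at the mass
points, i.e. `𝒥 k (x n) = λ n ⬝ R k n`, the series `K(·,t) = Σ_k u_k ⬝ 𝒥 k t ⬝ p_k`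
converges in `L²(μ)` for every `t`, and `K(·, x_n) = λ_n ⬝ F_n` where
`F_n = Σ_k u_k ⬝ R k n ⬝ p_k`. -/
theorem kernel_exists_interpolating
    {m : MeasurableSpace ℝ} (μ : Measure ℝ)
    [TopologicalSpace.SeparableSpace (Lp ℂ 2 μ)]
    (p : ℕ → Lp ℂ 2 μ)
    (hp_orth : Orthonormal ℂ p)
    (hp_complete : (Submodule.span ℂ (Set.range p)).topologicalClosure = ⊤)
    (hp_real : ∀ k, ∀ᵐ x ∂μ, ((p k : ℝ →ₘ[μ] ℂ) x).im = 0)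
    (u : ℕ → ℂ) (hu : ∀ k, ‖u k‖ = 1)
    (x : ℕ → ℝ) (hx : Function.Injective x)
    (ρ : ℕ → ℝ) (hρ : ∀ n, 0 < ρ n)
    (R : ℕ → ℕ → ℂ)
    (hdual : ∀ n m', HasSum (fun k => R k n * (starRingEnd ℂ) (R k m'))
      (if n = m' then 1 / (ρ n : ℂ) else 0))
    (𝒥 : ℕ → ℝ → ℂ) (h𝒥 : ∀ t : ℝ, Summable (fun k => ‖𝒥 k t‖ ^ 2))
    (lam : ℕ → ℂ) (hlam : ∀ n, lam n ≠ 0)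
    (hinterp : ∀ k n, 𝒥 k (x n) = lam n * R k n) :
    ∃ (K : ℝ → Lp ℂ 2 μ) (F : ℕ → Lp ℂ 2 μ),
      (∀ t : ℝ, HasSum (fun k => (u k * 𝒥 k t) • p k) (K t)) ∧
      (∀ n, HasSum (fun k => (u k * R k n) • p k) (F n)) ∧
      (∀ n, K (x n) = lam n • F n) := by
  have hKsum : ∀ t : ℝ, Summable fun k => (u k * 𝒥 k t) • p k := by
    intro t
    refine summable_smul_orthonormal hp_orth _ ?_
    have : (fun k => ‖u k * 𝒥 k t‖ ^ 2) = fun k => ‖𝒥 k t‖ ^ 2 := by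
      funext k
      rw [norm_mul]
      simp [hu k]
    rw [this]; exact h𝒥 t
  have hFsum : ∀ n, Summable fun k => (u k * R k n) • p k := by
    intro n
    refine summable_smul_orthonormal hp_orth _ ?_
    have h1 : Summable fun k => R k n * (starRingEnd ℂ) (R k n) := (hdual n n).summable
    have h2 : Summable fun k => ‖R k n‖ ^ 2 := by
      have := h1.map Complex.reCLM Complex.continuous_re
      convert this using 1
      funext k
      simp [Complex.mul_conj, ← Complex.normSq_eq_norm_sq]
    have : (fun k => ‖u k * R k n‖ ^ 2) = fun k => ‖R k n‖ ^ 2 := by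
      funext k
      rw [norm_mul]
      simp [hu k]
    rw [this]; exact h2
  refine ⟨fun t => ∑' k, (u k * 𝒥 k t) • p k, fun n => ∑' k, (u k * R k n) • p k,
    fun t => (hKsum t).hasSum, fun n => (hFsum n).hasSum, fun n => ?_⟩
  have h1 : HasSum (fun k => (u k * 𝒥 k (x n)) • p k)
      (lam n • ∑' k, (u k * R k n) • p k) := by
    have := ((hFsum n).hasSum).const_smul (lam n)
    convert this using 1
    funext k
    rw [hinterp k n]
    rw [smul_smul]
    ring_nf
  exact h1.tsum_eq
end

section
/- The family (K(·, x_n))_{n∈ℕ}, where K(·,t) := Σ_{k=0}^∞ u_k · (𝒥 k t) · p_k, is an orthogonal basis of L²(μ): each K(·,x_n) is nonzero, ⟨K(·,x_n), K(·,x_m)⟩_{L²(μ)} = 0 for n ≠ m, and the linear span of {K(·,x_n) : n ∈ ℕ} is dense in L²(μ). -/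
open MeasureTheory

section helpers
variable {E : Type*} [NormedAddCommGroup E] [InnerProductSpace ℂ E] [CompleteSpace E]

lemma aux_summable_smul {v : ℕ → E} (hv : Orthonormal ℂ v) {a : ℕ → ℂ}
    (ha : Summable fun k => ‖a k‖ ^ 2) : Summable (fun k => a k • v k) := by
  have := (hv.orthogonalFamily.summable_iff_norm_sq_summable a).2 ha
  simpa [LinearIsometry.toSpanSingleton_apply] using this

omit [CompleteSpace E] in
lemma aux_coeff {v : ℕ → E} (hv : Orthonormal ℂ v) {b : ℕ → ℂ} {G : E}
    (hG : HasSum (fun l => b l • v l) G) (k : ℕ) : (inner ℂ (v k) G : ℂ) = b k := by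
  have h1 : HasSum (fun l => b l * (inner ℂ (v k) (v l) : ℂ)) (inner ℂ (v k) G : ℂ) := by
    have := (innerSL ℂ (v k)).hasSum hG
    simpa [inner_smul_right] using this
  have h2 : HasSum (fun l => b l * (inner ℂ (v k) (v l) : ℂ)) (b k) := by
    have : (fun l => b l * (inner ℂ (v k) (v l) : ℂ)) = fun l => if l = k then b k else 0 := by
      funext l
      rcases eq_or_ne l k with rfl | h
      · simp [hv.1 l, inner_self_eq_norm_sq_to_K]
      · simp [hv.2 (Ne.symm h), h]
    rw [this]
    exact hasSum_ite_eq k (b k)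
  exact h1.unique h2

omit [CompleteSpace E] in
lemma aux_inner_hasSum {v : ℕ → E} (hv : Orthonormal ℂ v) {a b : ℕ → ℂ} {F G : E}
    (hF : HasSum (fun k => a k • v k) F) (hG : HasSum (fun k => b k • v k) G) :
    HasSum (fun k => (starRingEnd ℂ) (a k) * b k) (inner ℂ F G : ℂ) := by
  have h1 : HasSum (fun k => (inner ℂ G (a k • v k) : ℂ)) (inner ℂ G F : ℂ) :=
    (innerSL ℂ G).hasSum hF
  have h2 := h1.star
  have h3 : (fun k => star (inner ℂ G (a k • v k) : ℂ))
      = fun k => (starRingEnd ℂ) (a k) * b k := by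
    funext k
    rw [show star (inner ℂ G (a k • v k) : ℂ) = (inner ℂ (a k • v k) G : ℂ) from inner_conj_symm ..,
      inner_smul_left, aux_coeff hv hG k]
  rw [h3] at h2
  rwa [show star (inner ℂ G F : ℂ) = (inner ℂ F G : ℂ) from inner_conj_symm ..] at h2

end helpers

/-- The family `(K(·, x_n))_n`, where `K(·,t) = Σ_k u_k ⬝ 𝒥 k t ⬝ p_k`, is an
orthogonal basis of `L²(μ)`: every `K(·,x_n)` is nonzero, distinct members are
orthogonal, and their linear span is dense in `L²(μ)`. -/
theorem kernel_at_nodes_orthogonal_basis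
    {m : MeasurableSpace ℝ} (μ : Measure ℝ)
    [TopologicalSpace.SeparableSpace (Lp ℂ 2 μ)]
    (p : ℕ → Lp ℂ 2 μ)
    (hp_orth : Orthonormal ℂ p)
    (hp_complete : (Submodule.span ℂ (Set.range p)).topologicalClosure = ⊤)
    (hp_real : ∀ k, ∀ᵐ x ∂μ, ((p k : ℝ →ₘ[μ] ℂ) x).im = 0)
    (u : ℕ → ℂ) (hu : ∀ k, ‖u k‖ = 1)
    (x : ℕ → ℝ) (hx : Function.Injective x)
    (ρ : ℕ → ℝ) (hρ : ∀ n, 0 < ρ n)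
    (R : ℕ → ℕ → ℂ)
    (hdual : ∀ n m', HasSum (fun k => R k n * (starRingEnd ℂ) (R k m'))
      (if n = m' then 1 / (ρ n : ℂ) else 0))
    (horth : ∀ n m', HasSum (fun j => (ρ j : ℂ) * R n j * (starRingEnd ℂ) (R m' j))
      (if n = m' then 1 else 0))
    (hRcomplete : ∀ g : ℕ → ℂ, Summable (fun j => ρ j * ‖g j‖ ^ 2) →
      (∀ n, HasSum (fun j => (ρ j : ℂ) * R n j * (starRingEnd ℂ) (g j)) 0) → g = 0)
    (𝒥 : ℕ → ℝ → ℂ) (h𝒥 : ∀ t : ℝ, Summable (fun k => ‖𝒥 k t‖ ^ 2))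
    (lam : ℕ → ℂ) (hlam : ∀ n, lam n ≠ 0)
    (hinterp : ∀ k n, 𝒥 k (x n) = lam n * R k n) :
    ∃ K : ℝ → Lp ℂ 2 μ,
      (∀ t : ℝ, HasSum (fun k => (u k * 𝒥 k t) • p k) (K t)) ∧
      (∀ n, K (x n) ≠ 0) ∧
      (∀ n m', n ≠ m' → (inner ℂ (K (x n)) (K (x m')) : ℂ) = 0) ∧
      (Submodule.span ℂ (Set.range fun n => K (x n))).topologicalClosure = ⊤ := by
  classical
  have hu' : ∀ k, ‖u k‖ = 1 := fun k => by exact hu k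
  have huk : ∀ k, (starRingEnd ℂ) (u k) * u k = 1 := by
    intro k
    rw [mul_comm, Complex.mul_conj, Complex.normSq_eq_norm_sq, hu k]
    norm_num
  -- K and its HasSum property
  have hsum : ∀ t, Summable (fun k => ((u k * 𝒥 k t) • p k : Lp ℂ 2 μ)) := by
    intro t
    apply aux_summable_smul hp_orth
    have h : (fun k => ‖u k * 𝒥 k t‖ ^ 2) = fun k => ‖𝒥 k t‖ ^ 2 := by
      funext k; rw [norm_mul, hu', one_mul]
    rw [h]; exact h𝒥 t
  set K : ℝ → Lp ℂ 2 μ := fun t => ∑' k, (u k * 𝒥 k t) • p k with hKdef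
  have hK : ∀ t, HasSum (fun k => (u k * 𝒥 k t) • p k) (K t) := fun t => (hsum t).hasSum
  -- inner products between kernel values at nodes
  have hinner : ∀ n m', (inner ℂ (K (x n)) (K (x m')) : ℂ)
      = (starRingEnd ℂ) (lam n) * lam m' *
        (starRingEnd ℂ) (if n = m' then 1 / (ρ n : ℂ) else 0) := by
    intro n m'
    have h1 := aux_inner_hasSum hp_orth (hK (x n)) (hK (x m'))
    have h2 := ((hdual n m').star).mul_left ((starRingEnd ℂ) (lam n) * lam m')
    have h3 : (fun k => (starRingEnd ℂ) (u k * 𝒥 k (x n)) * (u k * 𝒥 k (x m')))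
        = fun k => (starRingEnd ℂ) (lam n) * lam m' *
            star (R k n * (starRingEnd ℂ) (R k m')) := by
      funext k
      simp only [hinterp, map_mul, star_mul', ← starRingEnd_apply, Complex.conj_conj]
      linear_combination ((starRingEnd ℂ) (lam n) * lam m' * (starRingEnd ℂ) (R k n) * R k m') * huk k
    rw [h3] at h1
    rw [starRingEnd_apply]
    exact h1.unique h2
  -- real summability facts
  have hRsq : ∀ n, Summable (fun k => ‖R k n‖ ^ 2) := by
    intro n
    have h := (hdual n n).summable
    have heq : (fun k => R k n * (starRingEnd ℂ) (R k n))
        = fun k => ((‖R k n‖ ^ 2 : ℝ) : ℂ) := by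
      funext k
      rw [Complex.mul_conj]
      norm_cast
      rw [Complex.normSq_eq_norm_sq]
    rw [heq] at h
    exact Complex.summable_ofReal.mp h
  have hρRsq : ∀ n, HasSum (fun j => ρ j * ‖R n j‖ ^ 2) 1 := by
    intro n
    have h := horth n n
    have heq : (fun j => (ρ j : ℂ) * R n j * (starRingEnd ℂ) (R n j))
        = fun j => ((ρ j * ‖R n j‖ ^ 2 : ℝ) : ℂ) := by
      funext j
      rw [mul_assoc, Complex.mul_conj]
      norm_cast
      rw [Complex.normSq_eq_norm_sq]
    rw [heq, if_pos rfl, show (1 : ℂ) = ((1 : ℝ) : ℂ) by norm_num] at h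
    exact Complex.hasSum_ofReal.mp h
  -- the orthonormal family w
  have hwsum : ∀ n, Summable (fun k =>
      (((Real.sqrt (ρ n) : ℝ) : ℂ) * u k * R k n) • p k) := by
    intro n
    apply aux_summable_smul hp_orth
    have heq : (fun k => ‖((Real.sqrt (ρ n) : ℝ) : ℂ) * u k * R k n‖ ^ 2)
        = fun k => ρ n * ‖R k n‖ ^ 2 := by
      funext k
      rw [norm_mul, norm_mul, hu', mul_one, Complex.norm_real,
        Real.norm_eq_abs, abs_of_nonneg (Real.sqrt_nonneg _), mul_pow,
        Real.sq_sqrt (hρ n).le]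
    rw [heq]
    exact ((hRsq n).mul_left (ρ n))
  set w : ℕ → Lp ℂ 2 μ := fun n => ∑' k, (((Real.sqrt (ρ n) : ℝ) : ℂ) * u k * R k n) • p k
    with hwdef
  have hw : ∀ n, HasSum (fun k => (((Real.sqrt (ρ n) : ℝ) : ℂ) * u k * R k n) • p k) (w n) :=
    fun n => (hwsum n).hasSum
  have hsq : ∀ n, ((Real.sqrt (ρ n) : ℝ) : ℂ) * ((Real.sqrt (ρ n) : ℝ) : ℂ) = (ρ n : ℂ) := by
    intro n
    norm_cast
    exact Real.mul_self_sqrt (hρ n).le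
  have hw_orth : Orthonormal ℂ w := by
    rw [orthonormal_iff_ite]
    intro i j
    have h1 := aux_inner_hasSum hp_orth (hw i) (hw j)
    have h2 := ((hdual i j).star).mul_left
      (((Real.sqrt (ρ i) : ℝ) : ℂ) * ((Real.sqrt (ρ j) : ℝ) : ℂ))
    have h3 : (fun k => (starRingEnd ℂ) (((Real.sqrt (ρ i) : ℝ) : ℂ) * u k * R k i) *
          ((((Real.sqrt (ρ j) : ℝ) : ℂ)) * u k * R k j))
        = fun k => ((Real.sqrt (ρ i) : ℝ) : ℂ) * ((Real.sqrt (ρ j) : ℝ) : ℂ) *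
            star (R k i * (starRingEnd ℂ) (R k j)) := by
      funext k
      simp only [map_mul, star_mul', ← starRingEnd_apply, Complex.conj_conj,
        Complex.conj_ofReal]
      linear_combination (((Real.sqrt (ρ i) : ℝ) : ℂ) * ((Real.sqrt (ρ j) : ℝ) : ℂ) *
        (starRingEnd ℂ) (R k i) * R k j) * huk k
    rw [h3] at h1
    have := h1.unique h2
    rw [this]
    rcases eq_or_ne i j with rfl | hij
    · rw [if_pos rfl, if_pos rfl, star_div₀, star_one]
      rw [show star ((ρ i : ℝ) : ℂ) = ((ρ i : ℝ) : ℂ) from Complex.conj_ofReal _]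
      rw [hsq i, mul_one_div_cancel (Complex.ofReal_ne_zero.mpr (hρ i).ne')]
    · rw [if_neg hij, if_neg hij, star_zero, mul_zero]
  -- V, the closed span of the kernel values
  set V := (Submodule.span ℂ (Set.range fun n => K (x n))).topologicalClosure with hVdef
  have hwV : ∀ n, w n ∈ V := by
    intro n
    have h3 : HasSum (fun k => ((((Real.sqrt (ρ n) : ℝ) : ℂ)) / lam n) •
        ((u k * 𝒥 k (x n)) • p k))
        (((((Real.sqrt (ρ n) : ℝ) : ℂ)) / lam n) • K (x n)) := (hK (x n)).const_smul _
    have heq : (fun k => ((((Real.sqrt (ρ n) : ℝ) : ℂ)) / lam n) • ((u k * 𝒥 k (x n)) • p k))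
        = fun k => (((Real.sqrt (ρ n) : ℝ) : ℂ) * u k * R k n) • p k := by
      funext k
      rw [smul_smul, hinterp]
      congr 1
      rw [div_mul_eq_mul_div, div_eq_iff (hlam n)]
      ring
    rw [heq] at h3
    rw [(hw n).unique h3]
    exact V.smul_mem _ (Submodule.le_topologicalClosure _ (Submodule.subset_span ⟨n, rfl⟩))
  -- every p k lies in V
  have hpV : ∀ k, p k ∈ V := by
    intro k
    set a : ℕ → ℂ := fun n =>
      ((Real.sqrt (ρ n) : ℝ) : ℂ) * (starRingEnd ℂ) (u k) * (starRingEnd ℂ) (R k n) with hadef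
    have hasum : Summable (fun n => a n • w n) := by
      apply aux_summable_smul hw_orth
      have heq : (fun n => ‖a n‖ ^ 2) = fun n => ρ n * ‖R k n‖ ^ 2 := by
        funext n
        rw [hadef, norm_mul, norm_mul, RCLike.norm_conj, RCLike.norm_conj, hu', mul_one,
          Complex.norm_real, Real.norm_eq_abs, abs_of_nonneg (Real.sqrt_nonneg _), mul_pow,
          Real.sq_sqrt (hρ n).le]
      rw [heq]
      exact (hρRsq k).summable
    obtain ⟨S, hS⟩ := hasum
    have hSV : S ∈ V := by
      refine (Submodule.isClosed_topologicalClosure _).mem_of_tendsto hS.tendsto_sum_nat ?_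
      filter_upwards with N
      exact Submodule.sum_mem _ fun n _ => V.smul_mem _ (hwV n)
    have hcoeff : ∀ k', (inner ℂ (p k') S : ℂ) = if k' = k then 1 else 0 := by
      intro k'
      have h1 : HasSum (fun n => a n * (inner ℂ (p k') (w n) : ℂ)) (inner ℂ (p k') S : ℂ) := by
        have := (innerSL ℂ (p k')).hasSum hS
        simpa [inner_smul_right] using this
      have hwc : ∀ n, (inner ℂ (p k') (w n) : ℂ)
          = ((Real.sqrt (ρ n) : ℝ) : ℂ) * u k' * R k' n :=
        fun n => aux_coeff hp_orth (hw n) k'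
      have h2 := (horth k' k).mul_left ((starRingEnd ℂ) (u k) * u k')
      have h3 : (fun n => a n * (inner ℂ (p k') (w n) : ℂ))
          = fun n => (starRingEnd ℂ) (u k) * u k' *
              ((ρ n : ℂ) * R k' n * (starRingEnd ℂ) (R k n)) := by
        funext n
        rw [hwc n, hadef]
        simp only []
        rw [← hsq n]
        ring
      rw [h3] at h1
      have hval := h1.unique h2
      rw [hval]
      rcases eq_or_ne k' k with rfl | hkk
      · simp [huk k']
      · simp [hkk]
    have hdiff : S - p k ∈ (Submodule.span ℂ (Set.range p))ᗮ := by
      rw [Submodule.mem_orthogonal]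
      intro y hy
      induction hy using Submodule.span_induction with
      | mem y hy =>
        obtain ⟨k', rfl⟩ := hy
        rw [inner_sub_right, hcoeff k']
        rcases eq_or_ne k' k with rfl | hkk
        · rw [if_pos rfl, orthonormal_iff_ite.mp hp_orth, if_pos rfl, sub_self]
        · rw [if_neg hkk, orthonormal_iff_ite.mp hp_orth, if_neg hkk, sub_self]
      | zero => rw [inner_zero_left]
      | add y z _ _ hy hz => rw [inner_add_left, hy, hz, add_zero]
      | smul c y _ hy => rw [inner_smul_left, hy, mul_zero]
    rw [Submodule.topologicalClosure_eq_top_iff.mp hp_complete] at hdiff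
    have : S = p k := by
      have := Submodule.mem_bot ℂ |>.mp hdiff
      rwa [sub_eq_zero] at this
    rw [← this]
    exact hSV
  refine ⟨K, hK, ?_, ?_, ?_⟩
  · intro n h0
    have h := hinner n n
    rw [h0, inner_zero_left, if_pos rfl] at h
    have hne : (starRingEnd ℂ) (lam n) * lam n * (starRingEnd ℂ) (1 / (ρ n : ℂ)) ≠ 0 := by
      have h1 : (starRingEnd ℂ) (lam n) ≠ 0 := by
        rw [starRingEnd_apply]
        exact star_ne_zero.mpr (hlam n)
      have h2 : (starRingEnd ℂ) (1 / (ρ n : ℂ)) ≠ 0 := by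
        rw [map_div₀, map_one, Complex.conj_ofReal]
        exact one_div_ne_zero (Complex.ofReal_ne_zero.mpr (hρ n).ne')
      exact mul_ne_zero (mul_ne_zero h1 (hlam n)) h2
    exact hne h.symm
  · intro n m' hnm
    rw [hinner n m', if_neg hnm, map_zero, mul_zero]
  · refine le_antisymm le_top ?_
    rw [← hp_complete]
    refine Submodule.topologicalClosure_minimal _ ?_ (Submodule.isClosed_topologicalClosure _)
    rw [Submodule.span_le]
    rintro y ⟨k, rfl⟩
    exact hpV k
end

section
/- The transform F defined by (Fg)(t) := ⟨g, K(·,t)⟩_{L²(μ)} for g ∈ L²(μ) and t ∈ ℝ is injective: if ⟨g, K(·,t)⟩_{L²(μ)} = 0 for every t ∈ ℝ, then g = 0 in L²(μ). (Injectivity of the transform F of Theorem 2.) -/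
open scoped ComplexConjugate

local notation "⟪" x ", " y "⟫" => @inner ℂ _ _ x y

lemma key_lemma (ρ : ℕ → ℝ) (hρ : ∀ n, 0 < ρ n) (R : ℕ → ℕ → ℂ)
    (hdual : ∀ n m', HasSum (fun k => R k n * (starRingEnd ℂ) (R k m'))
      (if n = m' then 1 / (ρ n : ℂ) else 0))
    (horth : ∀ n m', HasSum (fun j => (ρ j : ℂ) * R n j * (starRingEnd ℂ) (R m' j))
      (if n = m' then 1 else 0))
    (c : ℕ → ℂ) (hc : Summable fun k => ‖c k‖ ^ 2)
    (h : ∀ n, HasSum (fun k => c k * R k n) 0) : ∀ n, c n = 0 := by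
  classical
  intro n
  set E := lp (fun _ : ℕ => ℂ) 2 with hE
  have memtwo : ∀ f : ℕ → ℂ, (Summable fun k => ‖f k‖ ^ 2) → Memℓp f 2 := by
    intro f hf
    apply memℓp_gen
    convert hf using 2 with k
    norm_num
  -- columns of R as elements of ℓ²
  have hcol : ∀ j, Summable fun k => ‖R k j‖ ^ 2 := by
    intro j
    have := (hdual j j).mapL Complex.reCLM
    simp only [if_pos rfl] at this
    refine this.summable.congr fun k => ?_
    simp [Complex.mul_conj, Complex.normSq_eq_norm_sq,
      ← Complex.ofReal_pow]
  let v : ℕ → E := fun j => ⟨fun k => R k j, memtwo _ (hcol j)⟩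
  have hvapp : ∀ j k, (v j : ∀ _ : ℕ, ℂ) k = R k j := fun j k => rfl
  -- inner products of columns
  have hvinner : ∀ i j, ⟪v i, v j⟫ = if i = j then 1 / (ρ i : ℂ) else 0 := by
    intro i j
    have h2 : HasSum (fun k => (⟪(v i : ∀ _ : ℕ, ℂ) k, (v j : ∀ _ : ℕ, ℂ) k⟫ : ℂ))
        (if j = i then 1 / (ρ j : ℂ) else 0) := by
      simpa [hvapp, RCLike.inner_apply, mul_comm] using hdual j i
    rw [(lp.hasSum_inner (𝕜 := ℂ) (v i) (v j)).unique h2]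
    by_cases hij : i = j
    · subst hij; simp
    · simp [hij, Ne.symm hij]
  -- scaled columns are orthonormal
  let w : ℕ → E := fun j => ((Real.sqrt (ρ j) : ℝ) : ℂ) • v j
  have hw : Orthonormal ℂ w := by
    rw [orthonormal_iff_ite]
    intro i j
    have : ⟪w i, w j⟫ = ((Real.sqrt (ρ i) : ℝ) : ℂ) * ((Real.sqrt (ρ j) : ℝ) : ℂ)
        * ⟪v i, v j⟫ := by
      simp [w, inner_smul_left, inner_smul_right, Complex.conj_ofReal]; ring
    rw [this, hvinner i j]
    by_cases hij : i = j
    · subst hij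
      rw [if_pos rfl, if_pos rfl, ← Complex.ofReal_mul,
        Real.mul_self_sqrt (hρ i).le]
      rw [mul_one_div, div_self]
      exact_mod_cast (hρ i).ne'
    · simp [hij]
  have hfam := hw.orthogonalFamily
  -- the coefficient sequence
  have hfmem : Summable fun j => ‖((Real.sqrt (ρ j) : ℝ) : ℂ) * conj (R n j)‖ ^ 2 := by
    have := (horth n n).mapL Complex.reCLM
    simp only [if_pos rfl] at this
    refine this.summable.congr fun j => ?_
    have : ((ρ j : ℂ) * R n j * conj (R n j)).re = ρ j * ‖R n j‖ ^ 2 := by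
      rw [mul_assoc, Complex.mul_conj, ← Complex.ofReal_mul]
      simp [Complex.normSq_eq_norm_sq, ← Complex.ofReal_pow]
    rw [Complex.reCLM_apply, this]
    rw [norm_mul, mul_pow, RCLike.norm_conj]
    congr 1
    rw [Complex.norm_real, Real.norm_eq_abs, abs_of_nonneg (Real.sqrt_nonneg _),
      Real.sq_sqrt (hρ j).le]
  let f : lp (fun _ : ℕ => ℂ) 2 :=
    ⟨fun j => ((Real.sqrt (ρ j) : ℝ) : ℂ) * conj (R n j), memtwo _ hfmem⟩
  set W := hfam.linearIsometry f with hW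
  have hsum : HasSum (fun j => ((ρ j : ℂ) * conj (R n j)) • v j) W := by
    have h0 := hfam.hasSum_linearIsometry f
    have heq : ∀ j, (LinearIsometry.toSpanSingleton ℂ _ (hw.1 j)) (f j)
        = ((ρ j : ℂ) * conj (R n j)) • v j := by
      intro j
      rw [LinearIsometry.toSpanSingleton_apply, smul_smul]
      congr 1
      show ((Real.sqrt (ρ j) : ℝ) : ℂ) * conj (R n j) * ((Real.sqrt (ρ j) : ℝ) : ℂ) = _
      rw [mul_comm, ← mul_assoc, ← Complex.ofReal_mul, Real.mul_self_sqrt (hρ j).le]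
    simp only [heq] at h0
    exact h0
  -- the coordinates of W
  have hWcoord : ∀ k, (W : ∀ _ : ℕ, ℂ) k = if n = k then 1 else 0 := by
    intro k
    have h1 := hsum.mapL (innerSL ℂ (lp.single 2 k (1 : ℂ)))
    have h2 : HasSum (fun j => (ρ j : ℂ) * conj (R n j) * R k j)
        (if n = k then 1 else 0) := by
      have := (horth n k).star
      simp only [star_mul', starRingEnd_self_apply, star_trivial] at this
      have hval : (star (if n = k then (1:ℂ) else 0)) = (if n = k then (1:ℂ) else 0) := by
        by_cases hnk : n = k <;> simp [hnk]
      rw [hval] at this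
      refine this.congr_fun fun j => ?_
      simp only [star_mul', starRingEnd_self_apply, RCLike.star_def, Complex.conj_ofReal]
      try ring
    have h3 : HasSum (fun j => (ρ j : ℂ) * conj (R n j) * R k j)
        (⟪lp.single 2 k (1 : ℂ), W⟫) := by
      refine h1.congr_fun fun j => ?_
      rw [innerSL_apply_apply, inner_smul_right, lp.inner_single_left]
      rw [hvapp, RCLike.inner_apply]
      simp
    have h4 := h3.unique h2
    rwa [lp.inner_single_left, RCLike.inner_apply, map_one, mul_one] at h4
  -- the vector a = conj c
  have hamem : Summable fun k => ‖conj (c k)‖ ^ 2 := by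
    refine hc.congr fun k => ?_; rw [RCLike.norm_conj]
  let a : E := ⟨fun k => conj (c k), memtwo _ hamem⟩
  have haapp : ∀ k, (a : ∀ _ : ℕ, ℂ) k = conj (c k) := fun k => rfl
  -- a is orthogonal to every column
  have hva : ∀ j, ⟪v j, a⟫ = (0 : ℂ) := by
    intro j
    refine (lp.hasSum_inner (𝕜 := ℂ) (v j) a).unique ?_
    have := (h j).star
    simp only [star_zero] at this
    refine this.congr_fun fun k => ?_
    simp only [hvapp, haapp, RCLike.inner_apply, star_mul', RCLike.star_def]
  -- compute ⟪a, W⟫ two ways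
  have hW0 : ⟪a, W⟫ = (0 : ℂ) := by
    have h1 := hsum.mapL (innerSL ℂ a)
    have h2 : HasSum (fun _ : ℕ => (0 : ℂ)) (⟪a, W⟫) := by
      refine h1.congr_fun fun j => ?_
      rw [innerSL_apply_apply, inner_smul_right, ← inner_conj_symm, hva j]
      simp
    exact (h2.unique hasSum_zero)
  have h6 : HasSum (fun k => (⟪(a : ∀ _ : ℕ, ℂ) k, (W : ∀ _ : ℕ, ℂ) k⟫ : ℂ)) ⟪a, W⟫ :=
    lp.hasSum_inner (𝕜 := ℂ) a W
  have h7 : HasSum (fun k => if k = n then c n else 0) (⟪a, W⟫ : ℂ) := by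
    refine h6.congr_fun fun k => ?_
    rw [RCLike.inner_apply, haapp, hWcoord]
    by_cases hk : k = n
    · subst hk; simp
    · simp [hk, Ne.symm hk]
  have h8 := h7.unique (hasSum_ite_eq n (c n))
  rw [hW0] at h8
  exact h8.symm




open MeasureTheory

/-- **Injectivity of the transform `F` of Theorem 2**: with
`K(·,t) = Σ_k u_k ⬝ 𝒥 k t ⬝ p_k ∈ L²(μ)`, the transform `(Fg)(t) = ⟨g, K(·,t)⟩`
is injective on `L²(μ)`: if `⟨g, K(·,t)⟩ = 0` for every real `t`, then `g = 0`. -/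
theorem transform_injective
    {m : MeasurableSpace ℝ} (μ : Measure ℝ)
    [TopologicalSpace.SeparableSpace (Lp ℂ 2 μ)]
    (p : ℕ → Lp ℂ 2 μ)
    (hp_orth : Orthonormal ℂ p)
    (hp_complete : (Submodule.span ℂ (Set.range p)).topologicalClosure = ⊤)
    (hp_real : ∀ k, ∀ᵐ x ∂μ, ((p k : ℝ →ₘ[μ] ℂ) x).im = 0)
    (u : ℕ → ℂ) (hu : ∀ k, ‖u k‖ = 1)
    (x : ℕ → ℝ) (hx : Function.Injective x)
    (ρ : ℕ → ℝ) (hρ : ∀ n, 0 < ρ n)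
    (R : ℕ → ℕ → ℂ)
    (hdual : ∀ n m', HasSum (fun k => R k n * (starRingEnd ℂ) (R k m'))
      (if n = m' then 1 / (ρ n : ℂ) else 0))
    (horth : ∀ n m', HasSum (fun j => (ρ j : ℂ) * R n j * (starRingEnd ℂ) (R m' j))
      (if n = m' then 1 else 0))
    (hRcomplete : ∀ g : ℕ → ℂ, Summable (fun j => ρ j * ‖g j‖ ^ 2) →
      (∀ n, HasSum (fun j => (ρ j : ℂ) * R n j * (starRingEnd ℂ) (g j)) 0) → g = 0)
    (𝒥 : ℕ → ℝ → ℂ) (h𝒥 : ∀ t : ℝ, Summable (fun k => ‖𝒥 k t‖ ^ 2))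
    (lam : ℕ → ℂ) (hlam : ∀ n, lam n ≠ 0)
    (hinterp : ∀ k n, 𝒥 k (x n) = lam n * R k n)
    (K : ℝ → Lp ℂ 2 μ)
    (hK : ∀ t : ℝ, HasSum (fun k => (u k * 𝒥 k t) • p k) (K t)) :
    ∀ g : Lp ℂ 2 μ, (∀ t : ℝ, (inner ℂ g (K t) : ℂ) = 0) → g = 0 := by
  intro g hg
  classical
  set c : ℕ → ℂ := fun k => u k * (inner ℂ g (p k) : ℂ) with hcdef
  have hc : Summable fun k => ‖c k‖ ^ 2 := by
    refine (hp_orth.inner_products_summable (x := g)).congr fun k => ?_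
    rw [hcdef, norm_mul, hu k, one_mul,
      ← inner_conj_symm, RCLike.norm_conj]
  have hn : ∀ n, HasSum (fun k => c k * R k n) 0 := by
    intro n
    have h0 := (hK (x n)).mapL (innerSL ℂ g)
    rw [innerSL_apply_apply, hg (x n)] at h0
    have h1 : HasSum (fun k => lam n * (c k * R k n)) 0 := by
      refine h0.congr_fun fun k => ?_
      rw [innerSL_apply_apply, inner_smul_right, hinterp k n, hcdef]
      ring
    have h2 := h1.mul_left (lam n)⁻¹
    rw [mul_zero] at h2
    refine h2.congr_fun fun k => ?_
    rw [inv_mul_cancel_left₀ (hlam n)]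
  have hc0 := key_lemma ρ hρ R hdual horth c hc hn
  have hg0 : ∀ k, (inner ℂ g (p k) : ℂ) = 0 := by
    intro k
    have := hc0 k
    rw [hcdef] at this
    have hu0 : u k ≠ 0 := by
      intro h0
      have := hu k
      rw [h0] at this
      simpa using this
    exact (mul_eq_zero.mp this).resolve_left hu0
  have hmem : g ∈ (Submodule.span ℂ (Set.range p))ᗮ := by
    rw [Submodule.mem_orthogonal']
    intro v hv
    refine Submodule.span_induction ?_ ?_ ?_ ?_ hv
    · rintro _ ⟨k, rfl⟩; exact hg0 k
    · exact inner_zero_right g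
    · intro y z _ _ hy hz; rw [inner_add_right, hy, hz, add_zero]
    · intro t y _ hy; rw [inner_smul_right, hy, mul_zero]
  rw [Submodule.topologicalClosure_eq_top_iff] at hp_complete
  rw [hp_complete, Submodule.mem_bot] at hmem
  exact hmem
end

section
/- Let u ∈ L²(μ), let f(t) := ⟨u, K(·,t)⟩_{L²(μ)} for t ∈ ℝ, and let k(t,s) := ⟨K(·,s), K(·,t)⟩_{L²(μ)}. Then k(x_n, x_n) = |λ_n|²/ρ_n > 0 for every n, and for every t ∈ ℝ the sampling series Σ_{n=0}^∞ f(x_n) · k(t, x_n)/k(x_n, x_n) converges absolutely with sum f(t). (Sampling part of Theorem 3.) -/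
open MeasureTheory

open scoped ENNReal

noncomputable section SamplingAux

abbrev E2 := lp (fun _ : ℕ => ℂ) 2

lemma memℓp_two_of_sq {f : ℕ → ℂ} (hf : Summable fun k => ‖f k‖ ^ 2) : Memℓp f 2 := by
  apply memℓp_gen
  have h2 : ((2 : ℝ≥0∞)).toReal = ((2 : ℕ) : ℝ) := by norm_num
  rw [h2]
  simpa [Real.rpow_natCast] using hf

lemma summable_sq_of_mem {f : ℕ → ℂ} (hf : Memℓp f 2) : Summable fun k => ‖f k‖ ^ 2 := by
  have h2 : ((2 : ℝ≥0∞)).toReal = ((2 : ℕ) : ℝ) := by norm_num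
  have := (memℓp_gen_iff (by rw [h2]; norm_num)).mp hf
  rw [h2] at this
  simpa [Real.rpow_natCast] using this

def toL2 (f : ℕ → ℂ) (hf : Memℓp f 2) : E2 := ⟨f, hf⟩

@[simp] lemma toL2_apply (f : ℕ → ℂ) (hf : Memℓp f 2) (kk : ℕ) :
    (toL2 f hf : ∀ _ : ℕ, ℂ) kk = f kk := rfl

lemma hasSum_inner_E2 (F G : E2) :
    HasSum (fun kk => (starRingEnd ℂ) ((F : ∀ _ : ℕ, ℂ) kk) * (G : ∀ _ : ℕ, ℂ) kk)
      (inner ℂ F G : ℂ) := by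
  simpa [RCLike.inner_apply, mul_comm] using lp.hasSum_inner (𝕜 := ℂ) F G

lemma cancel_aux (c A B : ℂ) (h : c ≠ 0) :
    ((starRingEnd ℂ) c * A) * (c * B) / ((starRingEnd ℂ) c * c) = B * A := by
  have h2 : (starRingEnd ℂ) c ≠ 0 := by
    rw [starRingEnd_apply]
    exact star_ne_zero.mpr h
  field_simp

lemma summable_mul_norms {A B : ℕ → ℝ} (hA : Summable fun n => A n ^ 2)
    (hB : Summable fun n => B n ^ 2) (hA0 : ∀ n, 0 ≤ A n) (hB0 : ∀ n, 0 ≤ B n) :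
    Summable fun n => A n * B n := by
  refine Summable.of_nonneg_of_le (fun n => mul_nonneg (hA0 n) (hB0 n)) (fun n => ?_)
    ((hA.add hB).div_const 2)
  have := two_mul_le_add_sq (A n) (B n)
  nlinarith

end SamplingAux

/-- **Sampling part of Theorem 3**: with `f(t) = ⟨g, K(·,t)⟩` and
`k(t,s) = ⟨K(·,s), K(·,t)⟩` (inner products of `L²(μ)`, conjugation on the second
factor as in the paper), one has `k(x_n, x_n) = |λ_n|²/ρ_n > 0`, and for every
real `t` the sampling series `Σ_n f(x_n) k(t,x_n)/k(x_n,x_n)` converges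
absolutely with sum `f(t)`. -/
theorem sampling_expansion
    {m : MeasurableSpace ℝ} (μ : Measure ℝ)
    [TopologicalSpace.SeparableSpace (Lp ℂ 2 μ)]
    (p : ℕ → Lp ℂ 2 μ)
    (hp_orth : Orthonormal ℂ p)
    (hp_complete : (Submodule.span ℂ (Set.range p)).topologicalClosure = ⊤)
    (hp_real : ∀ k, ∀ᵐ x ∂μ, ((p k : ℝ →ₘ[μ] ℂ) x).im = 0)
    (u : ℕ → ℂ) (hu : ∀ k, ‖u k‖ = 1)
    (x : ℕ → ℝ) (hx : Function.Injective x)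
    (ρ : ℕ → ℝ) (hρ : ∀ n, 0 < ρ n)
    (R : ℕ → ℕ → ℂ)
    (hdual : ∀ n m', HasSum (fun k => R k n * (starRingEnd ℂ) (R k m'))
      (if n = m' then 1 / (ρ n : ℂ) else 0))
    (horth : ∀ n m', HasSum (fun j => (ρ j : ℂ) * R n j * (starRingEnd ℂ) (R m' j))
      (if n = m' then 1 else 0))
    (hRcomplete : ∀ g : ℕ → ℂ, Summable (fun j => ρ j * ‖g j‖ ^ 2) →
      (∀ n, HasSum (fun j => (ρ j : ℂ) * R n j * (starRingEnd ℂ) (g j)) 0) → g = 0)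
    (𝒥 : ℕ → ℝ → ℂ) (h𝒥 : ∀ t : ℝ, Summable (fun k => ‖𝒥 k t‖ ^ 2))
    (lam : ℕ → ℂ) (hlam : ∀ n, lam n ≠ 0)
    (hinterp : ∀ k n, 𝒥 k (x n) = lam n * R k n)
    (K : ℝ → Lp ℂ 2 μ)
    (hK : ∀ t : ℝ, HasSum (fun k => (u k * 𝒥 k t) • p k) (K t))
    (g : Lp ℂ 2 μ)
    -- `f t = ⟨g, K(·,t)⟩ = ∫ g ⬝ conj (K(·,t)) dμ`, in Mathlib's convention:
    (f : ℝ → ℂ) (hf : ∀ t, f t = (inner ℂ (K t) g : ℂ))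
    -- `k t s = ⟨K(·,s), K(·,t)⟩ = ∫ K(·,s) ⬝ conj (K(·,t)) dμ`:
    (k : ℝ → ℝ → ℂ) (hk : ∀ t s, k t s = (inner ℂ (K t) (K s) : ℂ)) :
    (∀ n, k (x n) (x n) = ((‖lam n‖ ^ 2 / ρ n : ℝ) : ℂ) ∧
      0 < ‖lam n‖ ^ 2 / ρ n) ∧
    (∀ t : ℝ,
      Summable (fun n => ‖f (x n) * k t (x n) / k (x n) (x n)‖) ∧
      HasSum (fun n => f (x n) * k t (x n) / k (x n) (x n)) (f t)) := by
  classical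
  -- basic facts
  have hρ0 : ∀ n, (ρ n : ℂ) ≠ 0 := fun n => by
    exact_mod_cast ne_of_gt (hρ n)
  have hcu : ∀ kk, (starRingEnd ℂ) (u kk) * u kk = 1 := by
    intro kk
    rw [mul_comm, Complex.mul_conj, Complex.normSq_eq_norm_sq, hu kk]
    norm_num
  set sρ : ℕ → ℝ := fun n => Real.sqrt (ρ n) with hsρdef
  have hsρpos : ∀ n, 0 < sρ n := fun n => Real.sqrt_pos.mpr (hρ n)
  have hsρ0 : ∀ n, (sρ n : ℂ) ≠ 0 := fun n => by exact_mod_cast ne_of_gt (hsρpos n)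
  have hsρsq : ∀ n, (sρ n : ℂ) * (sρ n : ℂ) = (ρ n : ℂ) := by
    intro n
    rw [← Complex.ofReal_mul]
    norm_cast
    exact Real.mul_self_sqrt (hρ n).le
  -- the sequence W t ∈ ℓ²
  have hWmem : ∀ t : ℝ, Memℓp (fun kk => u kk * 𝒥 kk t) 2 := by
    intro t
    apply memℓp_two_of_sq
    have : (fun kk => ‖u kk * 𝒥 kk t‖ ^ 2) = fun kk => ‖𝒥 kk t‖ ^ 2 := by
      funext kk
      rw [norm_mul, hu kk, one_mul]
    rw [this]; exact h𝒥 t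
  set W : ℝ → E2 := fun t => toL2 (fun kk => u kk * 𝒥 kk t) (hWmem t) with hWdef
  -- the coefficient sequence of g
  have hamem : Memℓp (fun kk => (inner ℂ (p kk) g : ℂ)) 2 :=
    memℓp_two_of_sq (hp_orth.inner_products_summable g)
  set a : E2 := toL2 _ hamem with hadef
  -- ⟪K t, g⟫ = ⟪W t, a⟫
  have hfW : ∀ t, (inner ℂ (K t) g : ℂ) = (inner ℂ (W t) a : ℂ) := by
    intro t
    have h1 := ((hK t).mapL (innerSL ℂ g)).star
    have h2 := hasSum_inner_E2 (W t) a
    refine HasSum.unique ?_ h2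
    have : (fun kk => star ((innerSL ℂ g) ((u kk * 𝒥 kk t) • p kk)))
        = fun kk => (starRingEnd ℂ) ((W t : ∀ _ : ℕ, ℂ) kk) * (a : ∀ _ : ℕ, ℂ) kk := by
      funext kk
      simp only [innerSL_apply_apply, inner_smul_right, hWdef, hadef, toL2_apply]
      rw [star_mul', ← inner_conj_symm (p kk) g]
      rfl
    rw [this] at h1
    simpa using h1
  -- coefficients of K t
  have hcoef : ∀ t j, (inner ℂ (p j) (K t) : ℂ) = u j * 𝒥 j t := by
    intro t j
    have h1 := (hK t).mapL (innerSL ℂ (p j))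
    have h2 : HasSum (fun kk => (innerSL ℂ (p j)) ((u kk * 𝒥 kk t) • p kk)) (u j * 𝒥 j t) := by
      have he : (fun kk => (innerSL ℂ (p j)) ((u kk * 𝒥 kk t) • p kk))
          = fun kk => if kk = j then u j * 𝒥 j t else 0 := by
        funext kk
        simp only [innerSL_apply_apply, inner_smul_right]
        rw [orthonormal_iff_ite.mp hp_orth j kk]
        by_cases h : j = kk
        · subst h; simp
        · simp [h, Ne.symm h]
      rw [he]
      exact hasSum_ite_eq j _
    simpa using h1.unique h2
  -- ⟪K t, K s⟫ = ⟪W t, W s⟫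
  have hkW : ∀ t s, (inner ℂ (K t) (K s) : ℂ) = (inner ℂ (W t) (W s) : ℂ) := by
    intro t s
    have h1 := (hK s).mapL (innerSL ℂ (K t))
    have h2 := hasSum_inner_E2 (W t) (W s)
    refine HasSum.unique ?_ h2
    have he : (fun kk => (innerSL ℂ (K t)) ((u kk * 𝒥 kk s) • p kk))
        = fun kk => (starRingEnd ℂ) ((W t : ∀ _ : ℕ, ℂ) kk) * (W s : ∀ _ : ℕ, ℂ) kk := by
      funext kk
      simp only [innerSL_apply_apply, inner_smul_right, hWdef, toL2_apply]
      rw [← inner_conj_symm (K t) (p kk), hcoef t kk]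
      ring
    rwa [he] at h1
  -- square-summability of columns of R
  have hRsq : ∀ n, Summable fun kk => ‖R kk n‖ ^ 2 := by
    intro n
    have h1 := (hdual n n).mapL Complex.reCLM
    have he : (fun kk => Complex.reCLM (R kk n * (starRingEnd ℂ) (R kk n)))
        = fun kk => ‖R kk n‖ ^ 2 := by
      funext kk
      simp [Complex.mul_conj, Complex.normSq_eq_norm_sq,
        ← Complex.ofReal_pow]
    rw [he] at h1
    exact h1.summable
  -- the orthonormal family Φ
  have hΦmem : ∀ n, Memℓp (fun kk => (sρ n : ℂ) * (u kk * R kk n)) 2 := by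
    intro n
    apply memℓp_two_of_sq
    have h1 := (hRsq n).mul_left (ρ n)
    have he : (fun kk => ‖(sρ n : ℂ) * (u kk * R kk n)‖ ^ 2)
        = fun kk => ρ n * ‖R kk n‖ ^ 2 := by
      funext kk
      rw [norm_mul, norm_mul, hu kk, one_mul,
        Complex.norm_real, Real.norm_eq_abs, abs_of_pos (hsρpos n), mul_pow,
        Real.sq_sqrt (hρ n).le]
    rw [he]
    exact h1
  set Φf : ℕ → E2 := fun n => toL2 _ (hΦmem n) with hΦdef
  have hΦcoord : ∀ n kk, (Φf n : ∀ _ : ℕ, ℂ) kk = (sρ n : ℂ) * (u kk * R kk n) := fun n kk => rfl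
  have hΦinner : ∀ i j, (inner ℂ (Φf i) (Φf j) : ℂ) = if i = j then 1 else 0 := by
    intro i j
    have h1 := hasSum_inner_E2 (Φf i) (Φf j)
    have h2 := ((hdual i j).star.mul_left ((sρ i : ℂ) * (sρ j : ℂ)))
    have he : (fun kk => ((sρ i : ℂ) * (sρ j : ℂ)) * star (R kk i * (starRingEnd ℂ) (R kk j)))
        = fun kk => (starRingEnd ℂ) ((Φf i : ∀ _ : ℕ, ℂ) kk) * (Φf j : ∀ _ : ℕ, ℂ) kk := by
      funext kk
      simp only [hΦcoord, Complex.star_def, map_mul, Complex.conj_ofReal, Complex.conj_conj]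
      linear_combination (-((sρ i : ℂ) * (sρ j : ℂ) * (starRingEnd ℂ) (R kk i) * R kk j)) *
        (hcu kk)
    rw [he] at h2
    refine (h2.unique h1).symm.trans ?_
    by_cases hij : i = j
    · subst hij
      simp only [eq_self_iff_true, if_true]
      rw [star_div₀, star_one, Complex.star_def, Complex.conj_ofReal, mul_one_div,
        div_eq_one_iff_eq (hρ0 i)]
      exact hsρsq i
    · simp [hij]
  have hΦorth : Orthonormal ℂ Φf := orthonormal_iff_ite.mpr hΦinner
  -- the auxiliary orthonormal basis Ψ built from the rows of R
  have hΨsq : ∀ n, Summable fun j => ρ j * ‖R n j‖ ^ 2 := by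
    intro n
    have h1 := (horth n n).mapL Complex.reCLM
    have he : (fun j => Complex.reCLM ((ρ j : ℂ) * R n j * (starRingEnd ℂ) (R n j)))
        = fun j => ρ j * ‖R n j‖ ^ 2 := by
      funext j
      rw [mul_assoc, Complex.mul_conj, Complex.normSq_eq_norm_sq]
      simp [← Complex.ofReal_pow, ← Complex.ofReal_mul]
    rw [he] at h1
    exact h1.summable
  have hΨmem : ∀ n, Memℓp (fun j => (sρ j : ℂ) * R n j) 2 := by
    intro n
    apply memℓp_two_of_sq
    have he : (fun j => ‖(sρ j : ℂ) * R n j‖ ^ 2) = fun j => ρ j * ‖R n j‖ ^ 2 := by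
      funext j
      rw [norm_mul, Complex.norm_real, Real.norm_eq_abs, abs_of_pos (hsρpos j), mul_pow,
        Real.sq_sqrt (hρ j).le]
    rw [he]
    exact hΨsq n
  set Ψf : ℕ → E2 := fun n => toL2 _ (hΨmem n) with hΨdef
  have hΨcoord : ∀ n j, (Ψf n : ∀ _ : ℕ, ℂ) j = (sρ j : ℂ) * R n j := fun n j => rfl
  have hΨinner : ∀ i j, (inner ℂ (Ψf i) (Ψf j) : ℂ) = if i = j then 1 else 0 := by
    intro i j
    have h1 := hasSum_inner_E2 (Ψf i) (Ψf j)
    have h2 := (horth i j).star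
    have he2 : (fun jj => star ((ρ jj : ℂ) * R i jj * (starRingEnd ℂ) (R j jj)))
        = fun jj => (starRingEnd ℂ) ((Ψf i : ∀ _ : ℕ, ℂ) jj) * (Ψf j : ∀ _ : ℕ, ℂ) jj := by
      funext jj
      simp only [hΨcoord, Complex.star_def, map_mul, Complex.conj_ofReal, Complex.conj_conj]
      linear_combination (-((starRingEnd ℂ) (R i jj) * R j jj)) * (hsρsq jj)
    rw [he2] at h2
    refine (h2.unique h1).symm.trans ?_
    by_cases hij : i = j
    · subst hij; simp
    · simp [hij]
  have hΨorth : Orthonormal ℂ Ψf := orthonormal_iff_ite.mpr hΨinner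
  have hΨcomplete : (Submodule.span ℂ (Set.range Ψf))ᗮ = ⊥ := by
    rw [Submodule.eq_bot_iff]
    intro v hv
    have hv' : ∀ n, (inner ℂ (Ψf n) v : ℂ) = 0 := fun n =>
      (Submodule.mem_orthogonal _ v).mp hv (Ψf n) (Submodule.subset_span ⟨n, rfl⟩)
    have hg : ∀ n, HasSum
        (fun j => (ρ j : ℂ) * R n j * (starRingEnd ℂ) ((v : ∀ _ : ℕ, ℂ) j / (sρ j : ℂ))) 0 := by
      intro n
      have h1 := hasSum_inner_E2 (Ψf n) v
      rw [hv' n] at h1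
      have h2 := h1.star
      rw [star_zero] at h2
      have he : (fun j => star ((starRingEnd ℂ) ((Ψf n : ∀ _ : ℕ, ℂ) j) * (v : ∀ _ : ℕ, ℂ) j))
          = fun j => (ρ j : ℂ) * R n j * (starRingEnd ℂ) ((v : ∀ _ : ℕ, ℂ) j / (sρ j : ℂ)) := by
        funext j
        simp only [hΨcoord, Complex.star_def, map_mul, map_div₀, Complex.conj_ofReal,
          Complex.conj_conj]
        refine mul_right_cancel₀ (hsρ0 j) ?_
        rw [mul_assoc ((ρ j : ℂ) * R n j), div_mul_cancel₀ _ (hsρ0 j), ← hsρsq j]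
        ring
      rwa [he] at h2
    have hsummable : Summable fun j => ρ j * ‖(v : ∀ _ : ℕ, ℂ) j / (sρ j : ℂ)‖ ^ 2 := by
      have h1 := summable_sq_of_mem (lp.memℓp v)
      have he : (fun j => ρ j * ‖(v : ∀ _ : ℕ, ℂ) j / (sρ j : ℂ)‖ ^ 2)
          = fun j => ‖(v : ∀ _ : ℕ, ℂ) j‖ ^ 2 := by
        funext j
        rw [norm_div, Complex.norm_real, Real.norm_eq_abs, abs_of_pos (hsρpos j), div_pow,
          Real.sq_sqrt (hρ j).le]
        rw [mul_comm, div_mul_cancel₀ _ (ne_of_gt (hρ j))]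
      rw [he]
      exact h1
    have hg0 := hRcomplete _ hsummable hg
    have hvj : ∀ j, (v : ∀ _ : ℕ, ℂ) j = 0 := by
      intro j
      have := congrFun hg0 j
      simpa [div_eq_zero_iff, hsρ0 j] using this
    apply lp.ext
    funext j
    simp [hvj j]
  set Ψb := HilbertBasis.mkOfOrthogonalEqBot hΨorth hΨcomplete with hΨbdef
  have hΨb : ⇑Ψb = Ψf := HilbertBasis.coe_mkOfOrthogonalEqBot _ _
  have hu0 : ∀ kk, u kk ≠ 0 := by
    intro kk h
    have := hu kk
    rw [h] at this
    simp at this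
  have hΦcomplete : (Submodule.span ℂ (Set.range Φf))ᗮ = ⊥ := by
    rw [Submodule.eq_bot_iff]
    intro v hv
    have hv' : ∀ n, (inner ℂ (Φf n) v : ℂ) = 0 := fun n =>
      (Submodule.mem_orthogonal _ v).mp hv (Φf n) (Submodule.subset_span ⟨n, rfl⟩)
    have hCmem : Memℓp (fun kk => u kk * (starRingEnd ℂ) ((v : ∀ _ : ℕ, ℂ) kk)) 2 := by
      apply memℓp_two_of_sq
      have h1 := summable_sq_of_mem (lp.memℓp v)
      have he : (fun kk => ‖u kk * (starRingEnd ℂ) ((v : ∀ _ : ℕ, ℂ) kk)‖ ^ 2)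
          = fun kk => ‖(v : ∀ _ : ℕ, ℂ) kk‖ ^ 2 := by
        funext kk
        rw [norm_mul, hu kk, one_mul, RCLike.norm_conj]
      rw [he]
      exact h1
    set C : E2 := toL2 _ hCmem with hCdef
    have hCcoord : ∀ kk, (C : ∀ _ : ℕ, ℂ) kk
        = u kk * (starRingEnd ℂ) ((v : ∀ _ : ℕ, ℂ) kk) := fun kk => rfl
    have hv2 : ∀ n, HasSum (fun kk => (sρ n : ℂ) * ((C : ∀ _ : ℕ, ℂ) kk * R kk n)) 0 := by
      intro n
      have h1 := hasSum_inner_E2 (Φf n) v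
      rw [hv' n] at h1
      have h2 := h1.star
      rw [star_zero] at h2
      have he : (fun kk => star ((starRingEnd ℂ) ((Φf n : ∀ _ : ℕ, ℂ) kk) * (v : ∀ _ : ℕ, ℂ) kk))
          = fun kk => (sρ n : ℂ) * ((C : ∀ _ : ℕ, ℂ) kk * R kk n) := by
        funext kk
        simp only [hΦcoord, hCcoord, Complex.star_def, map_mul, Complex.conj_ofReal,
          Complex.conj_conj]
        ring
      rwa [he] at h2
    have hy := Ψb.hasSum_repr_symm C
    have hyn : ∀ n, (((Ψb.repr.symm C : E2)) : ∀ _ : ℕ, ℂ) n = 0 := by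
      intro n
      have h3 := hy.mapL (innerSL ℂ (lp.single 2 n 1))
      have he : (fun i => (innerSL ℂ (lp.single 2 n (1 : ℂ))) ((C : ∀ _ : ℕ, ℂ) i • Ψb i))
          = fun i => (sρ n : ℂ) * ((C : ∀ _ : ℕ, ℂ) i * R i n) := by
        funext i
        rw [innerSL_apply_apply, inner_smul_right, lp.inner_single_left, hΨb, hΨcoord]
        simp only [RCLike.inner_apply, map_one, one_mul]
        ring
      rw [he] at h3
      have h4 := (hv2 n).unique h3
      simp only [innerSL_apply_apply, lp.inner_single_left, RCLike.inner_apply, map_one,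
        one_mul, mul_one] at h4
      exact h4.symm
    have hy0 : Ψb.repr.symm C = 0 := by
      apply lp.ext
      funext n
      simp [hyn n]
    have hC0 : C = 0 := by
      have := Ψb.repr.apply_symm_apply C
      rw [hy0] at this
      simpa using this.symm
    have hvj : ∀ kk, (v : ∀ _ : ℕ, ℂ) kk = 0 := by
      intro kk
      have h5 : (C : ∀ _ : ℕ, ℂ) kk = 0 := by rw [hC0]; simp
      rw [hCcoord kk] at h5
      rcases mul_eq_zero.mp h5 with h | h
      · exact absurd h (hu0 kk)
      · simpa using congrArg (starRingEnd ℂ) h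
    apply lp.ext
    funext kk
    simp [hvj kk]
  set Φb := HilbertBasis.mkOfOrthogonalEqBot hΦorth hΦcomplete with hΦbdef
  have hΦb : ⇑Φb = Φf := HilbertBasis.coe_mkOfOrthogonalEqBot _ _
  -- |lam|² facts
  have hll : ∀ n, (starRingEnd ℂ) (lam n) * lam n = ((‖lam n‖ ^ 2 : ℝ) : ℂ) := by
    intro n
    rw [mul_comm, Complex.mul_conj, Complex.normSq_eq_norm_sq]
  -- the diagonal values of k
  have hkxx : ∀ n, k (x n) (x n) = ((‖lam n‖ ^ 2 / ρ n : ℝ) : ℂ) := by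
    intro n
    rw [hk, hkW]
    have h1 := hasSum_inner_E2 (W (x n)) (W (x n))
    have h2 := (hdual n n).mul_left (((‖lam n‖ ^ 2 : ℝ) : ℂ))
    have he : (fun kk => ((‖lam n‖ ^ 2 : ℝ) : ℂ) *
          (R kk n * (starRingEnd ℂ) (R kk n)))
        = fun kk => (starRingEnd ℂ) ((W (x n) : ∀ _ : ℕ, ℂ) kk) * (W (x n) : ∀ _ : ℕ, ℂ) kk := by
      funext kk
      have hWc : (W (x n) : ∀ _ : ℕ, ℂ) kk = u kk * (lam n * R kk n) := by
        rw [hWdef]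
        simp only [toL2_apply]
        rw [hinterp]
      rw [hWc, map_mul, map_mul]
      linear_combination (-(R kk n * (starRingEnd ℂ) (R kk n))) * (hll n) +
        (-((starRingEnd ℂ) (lam n) * lam n * (R kk n * (starRingEnd ℂ) (R kk n)))) * (hcu kk)
    rw [he] at h2
    rw [← h2.unique h1, if_pos rfl, mul_one_div]
    norm_cast
  have hpos : ∀ n, 0 < ‖lam n‖ ^ 2 / ρ n := fun n =>
    div_pos (pow_pos (norm_pos_iff.mpr (hlam n)) 2) (hρ n)
  refine ⟨fun n => ⟨hkxx n, hpos n⟩, fun t => ?_⟩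
  -- expansion of the samples of W
  have hWxn : ∀ n, W (x n) = (lam n / (sρ n : ℂ)) • Φf n := by
    intro n
    apply lp.ext
    funext kk
    rw [lp.coeFn_smul]
    simp only [Pi.smul_apply, smul_eq_mul, hΦcoord]
    have hWc : (W (x n) : ∀ _ : ℕ, ℂ) kk = u kk * (lam n * R kk n) := by
      rw [hWdef]
      simp only [toL2_apply]
      rw [hinterp]
    rw [hWc]
    field_simp [hsρ0 n]
  -- the sampling terms
  have hterm : ∀ n, f (x n) * k t (x n) / k (x n) (x n)
      = (inner ℂ (W t) (Φf n) : ℂ) * (inner ℂ (Φf n) a : ℂ) := by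
    intro n
    rw [hf, hk, hfW, hkW, hkxx n, hWxn n, inner_smul_left, inner_smul_right]
    have hcc : (starRingEnd ℂ) (lam n / (sρ n : ℂ)) * (lam n / (sρ n : ℂ))
        = ((‖lam n‖ ^ 2 / ρ n : ℝ) : ℂ) := by
      rw [map_div₀, Complex.conj_ofReal, div_mul_div_comm, hll n, hsρsq n, ← Complex.ofReal_div]
    rw [← hcc]
    exact cancel_aux _ _ _ (div_ne_zero (hlam n) (hsρ0 n))
  constructor
  · -- absolute convergence
    have h1 := hΦorth.inner_products_summable (W t)
    have h2 := hΦorth.inner_products_summable a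
    have h3 := summable_mul_norms h1 h2 (fun n => norm_nonneg _) (fun n => norm_nonneg _)
    refine Summable.congr h3 (fun n => ?_)
    rw [hterm n, norm_mul, norm_inner_symm (W t) (Φf n)]
  · -- the sampling series
    have h4 := Φb.hasSum_inner_mul_inner (W t) a
    have he : (fun n => (inner ℂ (W t) (Φb n) : ℂ) * (inner ℂ (Φb n) a : ℂ))
        = fun n => f (x n) * k t (x n) / k (x n) (x n) := by
      funext n
      rw [show Φb n = Φf n from congrFun hΦb n, hterm n]
    rw [he] at h4
    rw [hf t, hfW t]
    exact h4
end

section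
/- For every n ≥ 1 and every x ≠ 0, (∏_{j=0}^{n−1} C_j) · G_{n+1}(x) = G_1(x) · f_n^{(0)}(1/x) − G_0(x) · f_{n−1}^{(1)}(1/x). Consequently, if all C_j are nonzero and x₀ ≠ 0 satisfies G_1(x₀) = 0, then G_{n+1}(x₀) = −(G_0(x₀)/∏_{j=0}^{n−1} C_j) · f_{n−1}^{(1)}(1/x₀) for every n ≥ 1 (the general interpolation property of Section 5, extending the Bessel–Lommel relation). -/
/-- The generalized Lommel polynomials `f_n^{(m)}` of Section 5:
`f_0^{(m)}(y) = 1`, `f_1^{(m)}(y) = B_m y`, and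
`f_{n+1}^{(m)}(y) = B_{n+m} y f_n^{(m)}(y) − C_{n+m−1} f_{n−1}^{(m)}(y)` for `n ≥ 1`. -/
noncomputable def genLommel (B C : ℕ → ℂ) (m : ℕ) : ℕ → ℂ → ℂ
  | 0, _ => 1
  | 1, y => B m * y
  | (n + 2), y =>
      B (m + n + 1) * y * genLommel B C m (n + 1) y - C (m + n) * genLommel B C m n y

theorem genInterp_key (B C : ℕ → ℂ) (G : ℕ → ℝ → ℂ)
    (hG : ∀ m : ℕ, ∀ x : ℝ, x ≠ 0 →
      C m * G (m + 2) x = (B m / (x : ℂ)) * G (m + 1) x - G m x) :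
    ∀ n : ℕ, ∀ x : ℝ, x ≠ 0 →
      ((∏ j ∈ Finset.range (n + 1), C j) * G (n + 2) x =
        G 1 x * genLommel B C 0 (n + 1) (1 / (x : ℂ)) -
          G 0 x * genLommel B C 1 n (1 / (x : ℂ))) ∧
      ((∏ j ∈ Finset.range (n + 2), C j) * G (n + 3) x =
        G 1 x * genLommel B C 0 (n + 2) (1 / (x : ℂ)) -
          G 0 x * genLommel B C 1 (n + 1) (1 / (x : ℂ))) := by
  intro n
  induction n with
  | zero =>
    intro x hx
    have h0 := hG 0 x hx
    have h1 := hG 1 x hx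
    constructor
    · simp only [genLommel, Finset.prod_range_one, zero_add]
      linear_combination h0
    · simp only [genLommel, Finset.prod_range_succ, Finset.prod_range_one]
      linear_combination C 0 * h1 + (B 1 / (x : ℂ)) * h0
  | succ n ih =>
    intro x hx
    obtain ⟨ih1, ih2⟩ := ih x hx
    refine ⟨ih2, ?_⟩
    have h := hG (n + 2) x hx
    have e1 : 1 + n + 1 = n + 2 := by omega
    have e2 : (1 : ℕ) + n = n + 1 := by omega
    have e3 : n + 1 + 1 = n + 2 := by omega
    have e4 : n + 2 + 2 = n + 1 + 3 := by omega
    have e5 : n + 2 + 1 = n + 3 := by omega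
    simp only [genLommel, Finset.prod_range_succ, zero_add, e1, e2, e3, e4, e5] at h ih1 ih2 ⊢
    linear_combination ((∏ j ∈ Finset.range n, C j) * C n * C (n + 1)) * h +
      (B (n + 2) / (x : ℂ)) * ih2 - C (n + 1) * ih1

/-- **The general interpolation property of Section 5** (extending the
Bessel–Lommel relation): if the functions `G_m` satisfy the contiguous relation
`C_m G_{m+2}(x) = (B_m/x) G_{m+1}(x) − G_m(x)` for `x ≠ 0`, then for every `n ≥ 1`
and `x ≠ 0`,
`(∏_{j<n} C_j) G_{n+1}(x) = G_1(x) f_n^{(0)}(1/x) − G_0(x) f_{n−1}^{(1)}(1/x)`;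
consequently, if all `C_j` are nonzero and `G_1(x₀) = 0` with `x₀ ≠ 0`, then
`G_{n+1}(x₀) = −(G_0(x₀)/∏_{j<n} C_j) f_{n−1}^{(1)}(1/x₀)` for every `n ≥ 1`. -/
theorem general_interpolation_property (B C : ℕ → ℂ) (G : ℕ → ℝ → ℂ)
    (hG : ∀ m : ℕ, ∀ x : ℝ, x ≠ 0 →
      C m * G (m + 2) x = (B m / (x : ℂ)) * G (m + 1) x - G m x) :
    (∀ n : ℕ, 1 ≤ n → ∀ x : ℝ, x ≠ 0 →
      (∏ j ∈ Finset.range n, C j) * G (n + 1) x =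
        G 1 x * genLommel B C 0 n (1 / (x : ℂ)) -
          G 0 x * genLommel B C 1 (n - 1) (1 / (x : ℂ))) ∧
    ((∀ j, C j ≠ 0) → ∀ x₀ : ℝ, x₀ ≠ 0 → G 1 x₀ = 0 → ∀ n : ℕ, 1 ≤ n →
      G (n + 1) x₀ = -(G 0 x₀ / ∏ j ∈ Finset.range n, C j) *
        genLommel B C 1 (n - 1) (1 / (x₀ : ℂ))) := by
  have main : ∀ n : ℕ, 1 ≤ n → ∀ x : ℝ, x ≠ 0 →
      (∏ j ∈ Finset.range n, C j) * G (n + 1) x =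
        G 1 x * genLommel B C 0 n (1 / (x : ℂ)) -
          G 0 x * genLommel B C 1 (n - 1) (1 / (x : ℂ)) := by
    intro n hn x hx
    obtain ⟨k, rfl⟩ := Nat.exists_eq_add_of_le' hn
    simpa using (genInterp_key B C G hG k x hx).1
  refine ⟨main, ?_⟩
  intro hC x₀ hx₀ hG1 n hn
  have h := main n hn x₀ hx₀
  rw [hG1] at h
  have hprod : (∏ j ∈ Finset.range n, C j) ≠ 0 :=
    Finset.prod_ne_zero_iff.mpr fun j _ => hC j
  rw [neg_mul, div_mul_eq_mul_div, ← neg_div, eq_div_iff hprod]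
  linear_combination h
end
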